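/- Consider the rewriting system on lists of 'instructions', each instruction touching a finite set of process names, where adjacent instructions may be swapped whenever their name sets are disjoint. Then the reachability relation generated by these swaps is a congruence, and two instruction lists are inter-reachable if and only if they induce the same relative order on every pair of instructions with intersecting name sets. -/

import Mathlib

/-- Adjacent instructions with disjoint process-name sets may be swapped. -/
def Swap {Instr Name : Type*} (pn : Instr → Finset Name) :
    List Instr → List Instr → Prop :=
  fun l₁ l₂ => ∃ (xs ys : List Instr) (a b : Instr),
    Disjoint (pn a) (pn b) ∧ l₁ = xs ++ a :: b :: ys ∧ l₂ = xs ++ b :: a :: ys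

namespace SwapAux
open Relation

variable {Instr Name : Type*} (pn : Instr → Finset Name)

theorem swap_append_right {l₁ l₂ : List Instr} (r : List Instr) (h : Swap pn l₁ l₂) :
    Swap pn (l₁ ++ r) (l₂ ++ r) := by
  obtain ⟨xs, ys, a, b, hd, rfl, rfl⟩ := h
  exact ⟨xs, ys ++ r, a, b, hd, by simp, by simp⟩

theorem swap_append_left {l₁ l₂ : List Instr} (s : List Instr) (h : Swap pn l₁ l₂) :
    Swap pn (s ++ l₁) (s ++ l₂) := by
  obtain ⟨xs, ys, a, b, hd, rfl, rfl⟩ := h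
  exact ⟨s ++ xs, ys, a, b, hd, by simp, by simp⟩

theorem eqv_append_right {l₁ l₂ : List Instr} (r : List Instr)
    (h : EqvGen (Swap pn) l₁ l₂) : EqvGen (Swap pn) (l₁ ++ r) (l₂ ++ r) := by
  induction h with
  | rel _ _ h => exact .rel _ _ (swap_append_right pn r h)
  | refl _ => exact .refl _
  | symm _ _ _ ih => exact .symm _ _ ih
  | trans _ _ _ _ _ ih1 ih2 => exact .trans _ _ _ ih1 ih2

theorem eqv_append_left {l₁ l₂ : List Instr} (s : List Instr)
    (h : EqvGen (Swap pn) l₁ l₂) : EqvGen (Swap pn) (s ++ l₁) (s ++ l₂) := by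
  induction h with
  | rel _ _ h => exact .rel _ _ (swap_append_left pn s h)
  | refl _ => exact .refl _
  | symm _ _ _ ih => exact .symm _ _ ih
  | trans _ _ _ _ _ ih1 ih2 => exact .trans _ _ _ ih1 ih2

theorem eqv_append {l₁ l₂ l₁' l₂' : List Instr}
    (h : EqvGen (Swap pn) l₁ l₂) (h' : EqvGen (Swap pn) l₁' l₂') :
    EqvGen (Swap pn) (l₁ ++ l₁') (l₂ ++ l₂') :=
  .trans _ _ _ (eqv_append_right pn l₁' h) (eqv_append_left pn l₂ h')

theorem eqv_cons {l₁ l₂ : List Instr} (x : Instr)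
    (h : EqvGen (Swap pn) l₁ l₂) : EqvGen (Swap pn) (x :: l₁) (x :: l₂) :=
  eqv_append_left pn [x] h

theorem bubble (a : Instr) (u v : List Instr)
    (hd : ∀ x ∈ u, Disjoint (pn x) (pn a)) :
    EqvGen (Swap pn) (u ++ a :: v) (a :: (u ++ v)) := by
  induction u with
  | nil => exact .refl _
  | cons x u ih =>
      have h1 : EqvGen (Swap pn) (x :: (u ++ a :: v)) (x :: a :: (u ++ v)) :=
        eqv_cons pn x (ih (fun y hy => hd y (List.mem_cons_of_mem _ hy)))
      have h2 : Swap pn (x :: a :: (u ++ v)) (a :: x :: (u ++ v)) :=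
        ⟨[], u ++ v, x, a, hd x List.mem_cons_self, rfl, rfl⟩
      exact .trans _ _ _ h1 (.rel _ _ h2)

end SwapAux

namespace SwapAux
open Relation

variable {Instr Name : Type*} (pn : Instr → Finset Name)

def Cond (l₁ l₂ : List Instr) : Prop :=
  ∃ σ : Fin l₁.length ≃ Fin l₂.length,
    (∀ i : Fin l₁.length, l₂.get (σ i) = l₁.get i) ∧
    ∀ i j : Fin l₁.length, i < j →
      ¬ Disjoint (pn (l₁.get i)) (pn (l₁.get j)) → σ i < σ j

theorem cond_refl (l : List Instr) : Cond pn l l :=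
  ⟨Equiv.refl _, fun _ => rfl, fun _ _ h _ => h⟩

theorem cond_symm {l₁ l₂ : List Instr} (h : Cond pn l₁ l₂) : Cond pn l₂ l₁ := by
  obtain ⟨σ, hg, ho⟩ := h
  refine ⟨σ.symm, fun i => by rw [← hg (σ.symm i), Equiv.apply_symm_apply], ?_⟩
  intro i j hij hdep
  by_contra hle
  have hne : σ.symm i ≠ σ.symm j := fun e => absurd (congrArg σ e) (by
    simp only [Equiv.apply_symm_apply]; exact fun e' => absurd e' (ne_of_lt hij))
  have hlt : σ.symm j < σ.symm i := lt_of_le_of_ne (not_lt.mp hle) (Ne.symm hne)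
  have := ho _ _ hlt (by
    rw [← hg (σ.symm i), ← hg (σ.symm j), Equiv.apply_symm_apply, Equiv.apply_symm_apply]
    exact fun e => hdep e.symm)
  simp only [Equiv.apply_symm_apply] at this
  exact absurd hij (not_lt.mpr this.le)

theorem cond_trans {l₁ l₂ l₃ : List Instr} (h : Cond pn l₁ l₂) (h' : Cond pn l₂ l₃) :
    Cond pn l₁ l₃ := by
  obtain ⟨σ, hg, ho⟩ := h
  obtain ⟨τ, hg', ho'⟩ := h'
  refine ⟨σ.trans τ, fun i => by simpa using (hg' (σ i)).trans (hg i), ?_⟩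
  intro i j hij hdep
  exact ho' _ _ (ho i j hij hdep) (by rw [hg i, hg j]; exact hdep)

end SwapAux

namespace SwapAux
open Relation

variable {Instr Name : Type*} (pn : Instr → Finset Name)

theorem getmid {α : Type*} (xs : List α) (a b : α) (ys : List α) (i : ℕ) :
    (xs ++ a :: b :: ys)[i]? =
      if i < xs.length then xs[i]?
      else if i = xs.length then some a
      else if i = xs.length + 1 then some b
      else ys[i - xs.length - 2]? := by
  rcases lt_or_ge i xs.length with h1 | h1
  · rw [List.getElem?_append, if_pos h1, if_pos h1]
  · obtain ⟨d, rfl⟩ : ∃ d, i = xs.length + d := ⟨i - xs.length, by omega⟩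
    rw [if_neg (by omega), List.getElem?_append_right (by omega)]
    simp only [Nat.add_sub_cancel_left, Nat.add_sub_cancel]
    match d with
    | 0 => simp
    | 1 => simp
    | (d+2) =>
        rw [if_neg (by omega), if_neg (by omega)]
        simp only [List.getElem?_cons_succ]
        congr 1

theorem cond_of_swap {l₁ l₂ : List Instr} (h : Swap pn l₁ l₂) : Cond pn l₁ l₂ := by
  obtain ⟨xs, ys, a, b, hd, rfl, rfl⟩ := h
  have hlen : (xs ++ a :: b :: ys).length = (xs ++ b :: a :: ys).length := by simp
  set L := xs.length with hL
  have hp : L < (xs ++ a :: b :: ys).length := by simp only [List.length_append, List.length_cons]; omega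
  have hq : L + 1 < (xs ++ a :: b :: ys).length := by simp only [List.length_append, List.length_cons]; omega
  set p : Fin (xs ++ a :: b :: ys).length := ⟨L, hp⟩
  set q : Fin (xs ++ a :: b :: ys).length := ⟨L + 1, hq⟩
  have hval : ∀ k : Fin (xs ++ a :: b :: ys).length, ((Equiv.swap p q) k : ℕ) =
      if (k : ℕ) = L then L + 1 else if (k : ℕ) = L + 1 then L else (k : ℕ) := by
    intro k
    rw [Equiv.swap_apply_def]
    split_ifs with e1 e2 <;> simp only [Fin.ext_iff, p, q] at * <;> omega
  have hgetval : ∀ k : Fin (xs ++ a :: b :: ys).length,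
      ((xs ++ b :: a :: ys).get ((finCongr hlen) ((Equiv.swap p q) k)) : Instr)
        = (xs ++ a :: b :: ys).get k := by
    intro k
    apply Option.some.inj
    simp only [List.get_eq_getElem, finCongr_apply, Fin.coe_cast]
    rw [← List.getElem?_eq_getElem, ← List.getElem?_eq_getElem, getmid, getmid, hval k]
    have hk := k.2
    simp only [List.length_append, List.length_cons] at hk
    by_cases e1 : (k : ℕ) = L
    · rw [if_pos e1, if_neg (by omega), if_neg (by omega), if_pos rfl,
        if_neg (by omega), if_pos e1]
    · by_cases e2 : (k : ℕ) = L + 1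
      · rw [if_neg e1, if_pos e2, if_neg (by omega), if_pos rfl,
          if_neg (by omega), if_neg e1, if_pos e2]
      · rw [if_neg e1, if_neg e2]
        split_ifs <;> first | rfl | omega
  refine ⟨(Equiv.swap p q).trans (finCongr hlen), fun i => hgetval i, ?_⟩
  intro i j hij hdep
  simp only [Fin.lt_def, Equiv.trans_apply, finCongr_apply, Fin.coe_cast] at *
  rw [hval i, hval j]
  by_cases hc : (i : ℕ) = L ∧ (j : ℕ) = L + 1
  · exfalso
    apply hdep
    have h1 : (xs ++ a :: b :: ys).get i = a := by
      apply Option.some.inj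
      simp only [List.get_eq_getElem]
      rw [← List.getElem?_eq_getElem, getmid, if_neg (by omega), if_pos hc.1]
    have h2 : (xs ++ a :: b :: ys).get j = b := by
      apply Option.some.inj
      simp only [List.get_eq_getElem]
      rw [← List.getElem?_eq_getElem, getmid, if_neg (by omega), if_neg (by omega),
        if_pos hc.2]
    rw [h1, h2]
    exact hd
  · split_ifs <;> omega
end SwapAux

namespace SwapAux
open Relation

variable {Instr Name : Type*} (pn : Instr → Finset Name)

theorem eqv_of_cond : ∀ {l₁ l₂ : List Instr}, Cond pn l₁ l₂ → EqvGen (Swap pn) l₁ l₂ := by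
  intro l₁
  induction l₁ with
  | nil =>
      rintro l₂ ⟨σ, -, -⟩
      rw [List.length_eq_zero_iff.mp (Fin.equiv_iff_eq.mp ⟨σ.symm⟩)]
      exact .refl _
  | cons a t ih =>
      rintro l₂ ⟨σ₀, hg₀, ho₀⟩
      have hm : l₂.length = t.length + 1 := Fin.equiv_iff_eq.mp ⟨σ₀.symm⟩
      set σ' : Fin (t.length + 1) ≃ Fin (t.length + 1) := σ₀.trans (finCongr hm)
        with hσ'
      -- get values through σ'
      have hgv : ∀ i : Fin (t.length + 1),
          l₂[(σ' i : ℕ)]'(by rw [hm]; exact (σ' i).2) = (a :: t)[(i : ℕ)]'(i.2) := by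
        intro i
        have h := hg₀ i
        rw [List.get_eq_getElem, List.get_eq_getElem] at h
        exact h
      have hord : ∀ i j : Fin (t.length + 1), i < j →
          ¬ Disjoint (pn ((a :: t)[(i : ℕ)]'(i.2))) (pn ((a :: t)[(j : ℕ)]'(j.2))) →
            (σ' i : ℕ) < (σ' j : ℕ) := by
        intro i j hij hdep
        have h := ho₀ i j hij (by
          rw [List.get_eq_getElem, List.get_eq_getElem]; exact hdep)
        exact h
      set k : Fin (t.length + 1) := σ' 0 with hk
      set τ : Fin t.length ≃ Fin t.length :=
        (((finSuccEquiv' (0 : Fin (t.length + 1))).symm.trans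
          (σ'.trans (finSuccEquiv' k)))).removeNone with hτdef
      have hτ : ∀ i : Fin t.length, k.succAbove (τ i) = σ' i.succ := by
        intro i
        have h1 : σ' i.succ ≠ k := fun h => (Fin.succ_ne_zero i) (σ'.injective h)
        obtain ⟨j, hj⟩ := Fin.exists_succAbove_eq h1
        have he : ((finSuccEquiv' (0 : Fin (t.length + 1))).symm.trans
            (σ'.trans (finSuccEquiv' k))) (some i) = some j := by
          show (finSuccEquiv' k)
            (σ' ((finSuccEquiv' (0 : Fin (t.length + 1))).symm (some i))) = some j
          rw [finSuccEquiv'_symm_some, Fin.zero_succAbove, ← hj, finSuccEquiv'_succAbove]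
        have h2 := Equiv.removeNone_some _ ⟨j, he⟩
        rw [he] at h2
        rw [← hτdef] at h2
        rw [show τ i = j from Option.some.inj h2, hj]
      have hnat : ∀ i : Fin t.length, (σ' i.succ : ℕ) =
          if (τ i : ℕ) < (k : ℕ) then (τ i : ℕ) else (τ i : ℕ) + 1 := by
        intro i
        rw [← hτ i, Fin.succAbove]
        rcases lt_or_ge ((τ i : ℕ)) ((k : ℕ)) with h | h
        · rw [if_pos (show Fin.castSucc (τ i) < k from by
            rw [Fin.lt_def]; exact h), if_pos h]
          rfl
        · rw [if_neg (show ¬ Fin.castSucc (τ i) < k from by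
            rw [Fin.lt_def]; exact not_lt.mpr h), if_neg (not_lt.mpr h)]
          rfl
      have hkb : (k : ℕ) < l₂.length := by rw [hm]; exact k.2
      have hlen' : (l₂.eraseIdx (k : ℕ)).length = t.length := by
        rw [List.length_eraseIdx_of_lt hkb, hm]
        omega
      have hcond : Cond pn t (l₂.eraseIdx (k : ℕ)) := by
        refine ⟨τ.trans (finCongr hlen'.symm), ?_, ?_⟩
        · intro i
          rw [List.get_eq_getElem, List.get_eq_getElem]
          apply Option.some.inj
          rw [← List.getElem?_eq_getElem, ← List.getElem?_eq_getElem]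
          show (l₂.eraseIdx (k : ℕ))[(τ i : ℕ)]? = t[(i : ℕ)]?
          rw [List.getElem?_eraseIdx]
          have key : l₂[(σ' i.succ : ℕ)]? = t[(i : ℕ)]? := by
            rw [List.getElem?_eq_getElem (show (σ' i.succ : ℕ) < l₂.length from by
              rw [hm]; exact (σ' i.succ).2)]
            rw [hgv i.succ]
            show some ((a :: t)[(i : ℕ) + 1]'(Nat.succ_lt_succ i.2)) = t[(i : ℕ)]?
            rw [List.getElem_cons_succ, List.getElem?_eq_getElem i.2]
          rw [← key, hnat i]
          split_ifs <;> rfl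
        · intro i j hij hdep
          have hdep' : ¬ Disjoint (pn ((a :: t)[((i.succ : Fin (t.length+1)) : ℕ)]'(i.succ.2)))
              (pn ((a :: t)[((j.succ : Fin (t.length+1)) : ℕ)]'(j.succ.2))) := by
            rw [List.get_eq_getElem, List.get_eq_getElem] at hdep
            exact hdep
          have h1 : (σ' i.succ : ℕ) < (σ' j.succ : ℕ) :=
            hord i.succ j.succ (Fin.succ_lt_succ_iff.mpr hij) hdep'
          have h2 : k.succAbove (τ i) < k.succAbove (τ j) := by
            rw [Fin.lt_def, hτ i, hτ j]; exact h1
          have h3 : τ i < τ j := Fin.succAbove_lt_succAbove_iff.mp h2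
          exact Fin.lt_def.mpr (Fin.lt_def.mp h3)
      have ihr : EqvGen (Swap pn) t (l₂.eraseIdx (k : ℕ)) := ih hcond
      have ha : l₂[(k : ℕ)]'hkb = a := hgv 0
      have hsplit : l₂.take (k : ℕ) ++ a :: l₂.drop ((k : ℕ) + 1) = l₂ := by
        rw [← ha, ← List.drop_eq_getElem_cons hkb, List.take_append_drop]
      have herase : l₂.take (k : ℕ) ++ l₂.drop ((k : ℕ) + 1) = l₂.eraseIdx (k : ℕ) :=
        (List.eraseIdx_eq_take_drop_succ _ _).symm
      have hdisj : ∀ x ∈ l₂.take (k : ℕ), Disjoint (pn x) (pn a) := by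
        intro x hx
        obtain ⟨mi, hmi, rfl⟩ := List.mem_iff_getElem.mp hx
        have hmk : mi < (k : ℕ) := by
          have h' := hmi
          rw [List.length_take] at h'
          omega
        have hmil : mi < l₂.length := by omega
        have hmit : mi < t.length + 1 := by omega
        have hxeq : (l₂.take (k : ℕ))[mi]'hmi = l₂[mi]'hmil := List.getElem_take
        have hp0ne : (σ'.symm ⟨mi, hmit⟩ : Fin (t.length + 1)) ≠ 0 := by
          intro h
          have h2 : σ' 0 = (⟨mi, hmit⟩ : Fin (t.length + 1)) := by
            rw [← h, Equiv.apply_symm_apply]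
          have h3 : (k : ℕ) = mi := congrArg Fin.val (hk.trans h2)
          omega
        have hply : σ' (σ'.symm ⟨mi, hmit⟩) = ⟨mi, hmit⟩ := σ'.apply_symm_apply _
        by_contra hnd
        have hgp : (a :: t)[((σ'.symm ⟨mi, hmit⟩ : Fin (t.length+1)) : ℕ)]'(
            (σ'.symm ⟨mi, hmit⟩).2) = l₂[mi]'hmil := by
          rw [← hgv (σ'.symm ⟨mi, hmit⟩)]
          apply Option.some.inj
          rw [← List.getElem?_eq_getElem, ← List.getElem?_eq_getElem]
          rw [show ((σ' (σ'.symm ⟨mi, hmit⟩) : Fin (t.length+1)) : ℕ) = mi from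
            congrArg Fin.val hply]
        have hcontr := hord 0 (σ'.symm ⟨mi, hmit⟩) (Fin.pos_iff_ne_zero.mpr hp0ne) (by
          show ¬ Disjoint (pn ((a :: t)[(0 : ℕ)]'(Nat.succ_pos _)))
            (pn ((a :: t)[((σ'.symm ⟨mi, hmit⟩ : Fin (t.length+1)) : ℕ)]'(
              (σ'.symm ⟨mi, hmit⟩).2)))
          rw [hgp]
          rw [hxeq] at hnd
          exact fun h => hnd (Disjoint.symm h))
        rw [congrArg Fin.val hply] at hcontr
        have : (k : ℕ) < mi := by
          rw [hk]
          exact hcontr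
        omega
      have hbub : EqvGen (Swap pn)
          (l₂.take (k : ℕ) ++ a :: l₂.drop ((k : ℕ) + 1))
          (a :: (l₂.take (k : ℕ) ++ l₂.drop ((k : ℕ) + 1))) :=
        bubble pn a _ _ hdisj
      rw [hsplit, herase] at hbub
      exact .trans _ _ _ (eqv_cons pn a ihr) (.symm _ _ hbub)

end SwapAux

namespace SwapAux
open Relation
variable {Instr Name : Type*} (pn : Instr → Finset Name)

theorem cond_of_eqv {l₁ l₂ : List Instr} (h : EqvGen (Swap pn) l₁ l₂) : Cond pn l₁ l₂ := by
  induction h with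
  | rel _ _ h => exact cond_of_swap pn h
  | refl l => exact cond_refl pn l
  | symm _ _ _ ih => exact cond_symm pn ih
  | trans _ _ _ _ _ ih1 ih2 => exact cond_trans pn ih1 ih2

end SwapAux

theorem swap_reachability_congruence_and_characterization
    {Instr Name : Type*} (pn : Instr → Finset Name) :
    (∀ l₁ l₂ l₁' l₂' : List Instr,
      Relation.EqvGen (Swap pn) l₁ l₂ → Relation.EqvGen (Swap pn) l₁' l₂' →
        Relation.EqvGen (Swap pn) (l₁ ++ l₁') (l₂ ++ l₂')) ∧
    (∀ l₁ l₂ : List Instr,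
      Relation.EqvGen (Swap pn) l₁ l₂ ↔
        ∃ σ : Fin l₁.length ≃ Fin l₂.length,
          (∀ i : Fin l₁.length, l₂.get (σ i) = l₁.get i) ∧
          ∀ i j : Fin l₁.length, i < j →
            ¬ Disjoint (pn (l₁.get i)) (pn (l₁.get j)) → σ i < σ j) := by
  refine ⟨fun l₁ l₂ l₁' l₂' h h' => SwapAux.eqv_append pn h h', fun l₁ l₂ => ?_⟩
  exact ⟨fun h => SwapAux.cond_of_eqv pn h, fun h => SwapAux.eqv_of_cond pn h⟩
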